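/- Let 𝔐 = (V,⟨·,·⟩,A) be Jacobi–Tsankov and suppose x, y ∈ V are such that J(x)∘J(y) ≠ 0. Then there exists w ∈ V with ⟨J(x)J(y)w, w⟩ = ⟨J(y)J(w)x, x⟩ = ⟨J(w)J(x)y, y⟩ ≠ 0. -/
import Mathlib


noncomputable section

/-- The Jacobi operator `J(x) : y ↦ 𝒜(y,x)x` of a (tri)linear curvature operator `𝒜`. -/
def jacobiOp {V : Type*} [AddCommGroup V] [Module ℝ V]
    (Aop : V →ₗ[ℝ] V →ₗ[ℝ] V →ₗ[ℝ] V) (x : V) : V →ₗ[ℝ] V where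
  toFun y := Aop y x x
  map_add' y z := by simp
  map_smul' c y := by simp

/-- The polarized Jacobi operator `J(x,y) : z ↦ ½(𝒜(z,x)y + 𝒜(z,y)x)`. -/
def jacobiPol {V : Type*} [AddCommGroup V] [Module ℝ V]
    (Aop : V →ₗ[ℝ] V →ₗ[ℝ] V →ₗ[ℝ] V) (x y : V) : V →ₗ[ℝ] V where
  toFun z := (1/2 : ℝ) • (Aop z x y + Aop z y x)
  map_add' a b := by simp [smul_add]; abel
  map_smul' c a := by simp [smul_add, smul_comm c]

/-- If `𝔐 = (V,⟨·,·⟩,A)` is Jacobi–Tsankov and `J(x)∘J(y) ≠ 0`, then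
there is `w` with `⟨J(x)J(y)w,w⟩ = ⟨J(y)J(w)x,x⟩ = ⟨J(w)J(x)y,y⟩ ≠ 0`. -/
theorem jacobiTsankov_exists_w
    {V : Type*} [AddCommGroup V] [Module ℝ V] [FiniteDimensional ℝ V]
    -- a nondegenerate symmetric bilinear form ⟨·,·⟩ on V
    (B : LinearMap.BilinForm ℝ V)
    (hBsymm : ∀ x y : V, B x y = B y x)
    (hBnd : ∀ x : V, (∀ y : V, B x y = 0) → x = 0)
    -- the curvature operator 𝒜, with `A x y z w = ⟨𝒜(x,y)z, w⟩`
    (Aop : V →ₗ[ℝ] V →ₗ[ℝ] V →ₗ[ℝ] V)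
    -- A(x,y,z,w) = -A(y,x,z,w)
    (hA1 : ∀ x y z w : V, B (Aop x y z) w = - B (Aop y x z) w)
    -- A(x,y,z,w) = A(z,w,x,y)
    (hA2 : ∀ x y z w : V, B (Aop x y z) w = B (Aop z w x) y)
    -- first Bianchi identity
    (hA3 : ∀ x y z w : V, B (Aop x y z) w + B (Aop y z x) w + B (Aop z x y) w = 0)
    -- 𝔐 is Jacobi–Tsankov
    (hJT : ∀ x y : V, jacobiOp Aop x ∘ₗ jacobiOp Aop y = jacobiOp Aop y ∘ₗ jacobiOp Aop x)
    (x y : V) (hxy : jacobiOp Aop x ∘ₗ jacobiOp Aop y ≠ 0) :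
    ∃ w : V,
      B (jacobiOp Aop x (jacobiOp Aop y w)) w = B (jacobiOp Aop y (jacobiOp Aop w x)) x ∧
      B (jacobiOp Aop y (jacobiOp Aop w x)) x = B (jacobiOp Aop w (jacobiOp Aop x y)) y ∧
      B (jacobiOp Aop x (jacobiOp Aop y w)) w ≠ 0 := by
  have hJapp : ∀ a z : V, jacobiOp Aop a z = Aop z a a := fun a z => rfl
  -- antisymmetry in the last pair
  have hA1' : ∀ a b c d : V, B (Aop a b c) d = - B (Aop a b d) c := by
    intro a b c d
    rw [hA2, hA1, hA2]
  -- Aop a a c = 0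
  have hzero : ∀ a c : V, Aop a a c = 0 := by
    intro a c
    apply hBnd
    intro d
    have := hA1 a a c d
    linarith
  -- operator Bianchi identity
  have hBianchi : ∀ a b c : V, Aop a b c + Aop b c a + Aop c a b = 0 := by
    intro a b c
    apply hBnd
    intro d
    have := hA3 a b c d
    simpa [map_add] using this
  have hJTpt : ∀ u v z : V, jacobiOp Aop u (jacobiOp Aop v z) =
      jacobiOp Aop v (jacobiOp Aop u z) := fun u v z => LinearMap.congr_fun (hJT u v) z
  -- self-adjointness of the Jacobi operator
  have hsa : ∀ a u v : V, B (jacobiOp Aop a u) v = B (jacobiOp Aop a v) u := by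
    intro a u v
    rw [hJapp, hJapp, hA2, hA1, hA1']
    ring
  -- the key cyclic identity
  have key : ∀ a b c : V,
      B (jacobiOp Aop a (jacobiOp Aop b c)) c = B (jacobiOp Aop b (jacobiOp Aop c a)) a := by
    intro a b c
    set P : V →ₗ[ℝ] V := jacobiOp Aop (a + c) - jacobiOp Aop a - jacobiOp Aop c with hP
    have hPapp : ∀ z : V, P z = jacobiOp Aop (a + c) z - jacobiOp Aop a z - jacobiOp Aop c z :=
      fun z => rfl
    have hPcomm : ∀ z : V, jacobiOp Aop b (P z) = P (jacobiOp Aop b z) := by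
      intro z
      rw [hPapp, hPapp, map_sub, map_sub, hJTpt b (a+c) z, hJTpt b a z, hJTpt b c z]
    have hPsa : ∀ u v : V, B (P u) v = B (P v) u := by
      intro u v
      simp only [hPapp, map_sub, LinearMap.sub_apply]
      rw [hsa (a+c) u v, hsa a u v, hsa c u v]
    have hPa : P a = - jacobiOp Aop a c := by
      have hb : Aop a c a + Aop c a a + Aop a a c = 0 := hBianchi a c a
      rw [hzero a c, add_zero] at hb
      have h2 : Aop a c a = - Aop c a a := eq_neg_of_add_eq_zero_left hb
      have h0 : Aop a (a+c) (a+c) = Aop a a a + Aop a a c + Aop a c a + Aop a c c := by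
        simp only [map_add, LinearMap.add_apply]; abel
      rw [hPapp]
      simp only [hJapp]
      rw [h0, hzero a c, h2]
      abel
    have hPc : P c = - jacobiOp Aop c a := by
      have hb : Aop c a c + Aop a c c + Aop c c a = 0 := hBianchi c a c
      rw [hzero c a, add_zero] at hb
      have h2 : Aop c a c = - Aop a c c := eq_neg_of_add_eq_zero_left hb
      have h0 : Aop c (a+c) (a+c) = Aop c a a + Aop c a c + Aop c c a + Aop c c c := by
        simp only [map_add, LinearMap.add_apply]; abel
      rw [hPapp]
      simp only [hJapp]
      rw [h0, hzero c a, h2]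
      abel
    calc B (jacobiOp Aop a (jacobiOp Aop b c)) c
        = B (jacobiOp Aop b (jacobiOp Aop a c)) c := by rw [hJTpt a b c]
      _ = - B (jacobiOp Aop b (P a)) c := by rw [hPa]; simp
      _ = - B (P (jacobiOp Aop b a)) c := by rw [hPcomm]
      _ = - B (P c) (jacobiOp Aop b a) := by rw [hPsa]
      _ = B (jacobiOp Aop c a) (jacobiOp Aop b a) := by rw [hPc]; simp
      _ = B (jacobiOp Aop b a) (jacobiOp Aop c a) := hBsymm _ _
      _ = B (jacobiOp Aop b (jacobiOp Aop c a)) a := hsa b a (jacobiOp Aop c a)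
  -- symmetry of B(J(x)J(y)u, v) in u,v
  have hTsa : ∀ u v : V,
      B (jacobiOp Aop x (jacobiOp Aop y u)) v = B (jacobiOp Aop x (jacobiOp Aop y v)) u := by
    intro u v
    calc B (jacobiOp Aop x (jacobiOp Aop y u)) v
        = B (jacobiOp Aop x v) (jacobiOp Aop y u) := hsa x _ v
      _ = B (jacobiOp Aop y u) (jacobiOp Aop x v) := hBsymm _ _
      _ = B (jacobiOp Aop y (jacobiOp Aop x v)) u := hsa y u _
      _ = B (jacobiOp Aop x (jacobiOp Aop y v)) u := by rw [hJTpt y x v]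
  -- existence of w with nonzero value
  have hex : ∃ w : V, B (jacobiOp Aop x (jacobiOp Aop y w)) w ≠ 0 := by
    by_contra h
    push_neg at h
    apply hxy
    ext u
    simp only [LinearMap.comp_apply, LinearMap.zero_apply]
    apply hBnd
    intro v
    have h1 := h (u + v)
    have h2 := h u
    have h3 := h v
    simp only [map_add, LinearMap.map_add, LinearMap.add_apply] at h1
    have h4 := hTsa u v
    linarith
  obtain ⟨w, hw⟩ := hex
  exact ⟨w, key x y w, key y w x, hw⟩
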